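/- For every pair of integers p, q ≥ 2, there exist 3-by-3 real symmetric positive definite matrices A and B such that Tr(A B A^p B^q) < 0; moreover the fixed pair A = [[1,20,210],[20,402,4240],[210,4240,44903]], B = [[36501,-3820,190],[-3820,401,-20],[190,-20,1]] works simultaneously for all p, q ≥ 2. -/

import Mathlib

open Matrix

noncomputable def AA : Matrix (Fin 3) (Fin 3) ℝ := !![1,20,210; 20,402,4240; 210,4240,44903]
noncomputable def BB : Matrix (Fin 3) (Fin 3) ℝ := !![36501,-3820,190; -3820,401,-20; 190,-20,1]

lemma hApd : AA.PosDef := by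
  rw [Matrix.posDef_iff_dotProduct_mulVec]
  constructor
  · ext i j; fin_cases i <;> fin_cases j <;> simp [AA]
  · intro x hx
    have hne : ¬(x 0 = 0 ∧ x 1 = 0 ∧ x 2 = 0) := by
      rintro ⟨h0, h1, h2⟩
      exact hx (funext fun i => by fin_cases i <;> assumption)
    simp only [AA]
    simp [Matrix.mulVec, dotProduct, Fin.sum_univ_three]
    by_contra hle
    push_neg at hle
    have s1 := sq_nonneg (x 0 + 20 * x 1 + 210 * x 2)
    have s2 := sq_nonneg (x 1 + 20 * x 2)
    have s3 := sq_nonneg (x 2)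
    have hc2 : (x 2) ^ 2 = 0 := le_antisymm (by nlinarith) s3
    have hc : x 2 = 0 := by have := sq_eq_zero_iff.mp hc2; simpa using this
    rw [hc] at hle s1 s2
    have hb2 : (x 1) ^ 2 = 0 := le_antisymm (by nlinarith) (sq_nonneg _)
    have hb : x 1 = 0 := by have := sq_eq_zero_iff.mp hb2; simpa using this
    rw [hb] at hle s1
    have ha2 : (x 0) ^ 2 = 0 := le_antisymm (by nlinarith) (sq_nonneg _)
    have ha : x 0 = 0 := by have := sq_eq_zero_iff.mp ha2; simpa using this
    exact hne ⟨ha, hb, hc⟩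

lemma hBpd : BB.PosDef := by
  rw [Matrix.posDef_iff_dotProduct_mulVec]
  constructor
  · ext i j; fin_cases i <;> fin_cases j <;> simp [BB]
  · intro x hx
    have hne : ¬(x 0 = 0 ∧ x 1 = 0 ∧ x 2 = 0) := by
      rintro ⟨h0, h1, h2⟩
      exact hx (funext fun i => by fin_cases i <;> assumption)
    simp only [BB]
    simp [Matrix.mulVec, dotProduct, Fin.sum_univ_three]
    by_contra hle
    push_neg at hle
    have s1 := sq_nonneg (190 * x 0 - 20 * x 1 + x 2)
    have s2 := sq_nonneg (x 1 - 20 * x 0)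
    have s3 := sq_nonneg (x 0)
    have hc2 : (x 0) ^ 2 = 0 := le_antisymm (by nlinarith) s3
    have hc : x 0 = 0 := by have := sq_eq_zero_iff.mp hc2; simpa using this
    rw [hc] at hle s1 s2
    have hb2 : (x 1) ^ 2 = 0 := le_antisymm (by nlinarith) (sq_nonneg _)
    have hb : x 1 = 0 := by have := sq_eq_zero_iff.mp hb2; simpa using this
    rw [hb] at hle s1
    have ha2 : (x 2) ^ 2 = 0 := le_antisymm (by nlinarith) (sq_nonneg _)
    have ha : x 2 = 0 := by have := sq_eq_zero_iff.mp ha2; simpa using this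
    exact hne ⟨hc, hb, ha⟩

lemma hAB : AA * BB = !![1,0,0; -20,2,0; -20,-20,3] := by
  rw [AA, BB, Matrix.mul_fin_three]; norm_num

lemma hA2 : AA ^ 2 = !![44501, 898460, 9514640; 898460, 18139604, 192097400; 9514640, 192097400, 2034301109] := by
  rw [pow_two, AA, Matrix.mul_fin_three]; norm_num

lemma hA3 : AA ^ 3 = !![2016088101, 40704144540, 431054695530; 40704144540, 821803066008, 8702850149760; 431054695530, 8702850149760, 92162713747827] := by
  rw [pow_succ, hA2, AA, Matrix.mul_fin_three]; norm_num

lemma hA4 : AA ^ 4 = !![91337585040201, 1844075296914300, 19528657944734400; 1844075296914300, 37231263550408416, 394277073144900600; 19528657944734400, 394277073144900600, 4175372941539719481] := by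
  rw [pow_succ, hA3, AA, Matrix.mul_fin_three]; norm_num

lemma hB2 : BB ^ 2 = !![1346951501, -140969440, 7011780; -140969440, 14753601, -733840; 7011780, -733840, 36501] := by
  rw [pow_two, BB, Matrix.mul_fin_three]; norm_num

lemma hB3 : BB ^ 3 = !![49704912237001, -5202023714860, 258747185770; -5202023714860, 544434131601, -27079999460; 258747185770, -27079999460, 1346951501] := by
  rw [pow_succ, hB2, BB, Matrix.mul_fin_three]; norm_num

lemma hB4 : BB ^ 4 = !![1834199894118835001, -191963951198718080, 9548232546513160; -191963951198718080, 20090590277526401, -999300268454880; 9548232546513160, -999300268454880, 49704912237001] := by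
  rw [pow_succ, hB3, BB, Matrix.mul_fin_three]; norm_num

/-- Cayley–Hamilton for `AA`. -/
lemma hAch : AA ^ 3 = (45306 : ℝ) • AA ^ 2 - (74211 : ℝ) • AA + (6 : ℝ) • 1 := by
  rw [hA3, hA2]
  ext i j
  fin_cases i <;> fin_cases j <;>
    simp [AA, Matrix.one_apply] <;> norm_num

/-- Cayley–Hamilton for `BB`. -/
lemma hBch : BB ^ 3 = (36903 : ℝ) • BB ^ 2 - (44903 : ℝ) • BB + (1 : ℝ) • 1 := by
  rw [hB3, hB2]
  ext i j
  fin_cases i <;> fin_cases j <;>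
    simp [BB, Matrix.one_apply] <;> norm_num

noncomputable def Ftr (p q : ℕ) : ℝ := (AA * BB * AA ^ p * BB ^ q).trace

lemma recP (p q : ℕ) :
    Ftr (p + 3) q = 45306 * Ftr (p + 2) q - 74211 * Ftr (p + 1) q + 6 * Ftr p q := by
  have e : AA ^ (p + 3) = (45306 : ℝ) • AA ^ (p + 2) - (74211 : ℝ) • AA ^ (p + 1) + (6 : ℝ) • AA ^ p := by
    have h : AA ^ (p + 3) = AA ^ p * AA ^ 3 := by rw [← pow_add]
    rw [h, hAch]
    simp [mul_sub, mul_add, mul_smul_comm, ← pow_add, ← pow_succ]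
  simp only [Ftr, e]
  simp [Matrix.mul_sub, Matrix.sub_mul, Matrix.mul_add, Matrix.add_mul,
    mul_smul_comm, smul_mul_assoc, Matrix.trace_add, Matrix.trace_sub, Matrix.trace_smul,
    smul_eq_mul]

lemma recQ (p q : ℕ) :
    Ftr p (q + 3) = 36903 * Ftr p (q + 2) - 44903 * Ftr p (q + 1) + Ftr p q := by
  have e : BB ^ (q + 3) = (36903 : ℝ) • BB ^ (q + 2) - (44903 : ℝ) • BB ^ (q + 1) + (1 : ℝ) • BB ^ q := by
    have h : BB ^ (q + 3) = BB ^ q * BB ^ 3 := by rw [← pow_add]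
    rw [h, hBch]
    simp [mul_sub, mul_add, mul_smul_comm, ← pow_add, ← pow_succ]
  simp only [Ftr, e]
  simp [Matrix.mul_sub, Matrix.sub_mul, Matrix.mul_add, Matrix.add_mul,
    mul_smul_comm, smul_mul_assoc, Matrix.trace_add, Matrix.trace_sub, Matrix.trace_smul,
    smul_eq_mul]

-- numeric base values
lemma F22 : Ftr 2 2 = -3164 := by
  rw [Ftr, hAB, hA2, hB2, Matrix.mul_fin_three, Matrix.mul_fin_three]
  rw [Matrix.trace_fin_three]; simp [Matrix.cons_val', Matrix.cons_val]; norm_num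
lemma F23 : Ftr 2 3 = -171233664 := by
  rw [Ftr, hAB, hA2, hB3, Matrix.mul_fin_three, Matrix.mul_fin_three]
  rw [Matrix.trace_fin_three]; simp [Matrix.cons_val', Matrix.cons_val]; norm_num
lemma F24 : Ftr 2 4 = -6318893781764 := by
  rw [Ftr, hAB, hA2, hB4, Matrix.mul_fin_three, Matrix.mul_fin_three]
  rw [Matrix.trace_fin_three]; simp [Matrix.cons_val', Matrix.cons_val]; norm_num
lemma F32 : Ftr 3 2 = -219049002 := by
  rw [Ftr, hAB, hA3, hB2, Matrix.mul_fin_three, Matrix.mul_fin_three]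
  rw [Matrix.trace_fin_three]; simp [Matrix.cons_val', Matrix.cons_val]; norm_num
lemma F33 : Ftr 3 3 = -10537988104302 := by
  rw [Ftr, hAB, hA3, hB3, Matrix.mul_fin_three, Matrix.mul_fin_three]
  rw [Matrix.trace_fin_three]; simp [Matrix.cons_val', Matrix.cons_val]; norm_num
lemma F34 : Ftr 3 4 = -388873536893369802 := by
  rw [Ftr, hAB, hA3, hB4, Matrix.mul_fin_three, Matrix.mul_fin_three]
  rw [Matrix.trace_fin_three]; simp [Matrix.cons_val', Matrix.cons_val]; norm_num
lemma F42 : Ftr 4 2 = -9923997300324 := by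
  rw [Ftr, hAB, hA4, hB2, Matrix.mul_fin_three, Matrix.mul_fin_three]
  rw [Matrix.trace_fin_three]; simp [Matrix.cons_val', Matrix.cons_val]; norm_num
lemma F43 : Ftr 4 3 = -477421308542380824 := by
  rw [Ftr, hAB, hA4, hB3, Matrix.mul_fin_three, Matrix.mul_fin_three]
  rw [Matrix.trace_fin_three]; simp [Matrix.cons_val', Matrix.cons_val]; norm_num
lemma F44 : Ftr 4 4 = -17617832833924812095724 := by
  rw [Ftr, hAB, hA4, hB4, Matrix.mul_fin_three, Matrix.mul_fin_three]
  rw [Matrix.trace_fin_three]; simp [Matrix.cons_val', Matrix.cons_val]; norm_num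

/-- Generic decay lemma (strict version). -/
lemma seq_neg {t s d : ℝ} (ht : 4 ≤ 2 * t - s) (hs : 0 ≤ s) (hd : 0 ≤ d)
    {h : ℕ → ℝ} (rec : ∀ n, h (n + 3) = t * h (n + 2) - s * h (n + 1) + d * h n)
    (h0 : h 0 < 0) (h1 : h 1 < 0) (h2 : h 2 < 0)
    (g1 : h 1 ≤ 2 * h 0) (g2 : h 2 ≤ 2 * h 1) :
    ∀ n, h n < 0 ∧ h (n + 1) ≤ 2 * h n := by
  have key : ∀ n, (h n < 0 ∧ h (n + 1) ≤ 2 * h n) ∧ (h (n + 1) < 0 ∧ h (n + 2) ≤ 2 * h (n + 1)) := by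
    intro n
    induction n with
    | zero => exact ⟨⟨h0, g1⟩, h1, g2⟩
    | succ n ih =>
      obtain ⟨⟨hn, gn⟩, hn1, gn1⟩ := ih
      have hn2 : h (n + 2) < 0 := lt_of_le_of_lt gn1 (by linarith)
      refine ⟨⟨hn1, gn1⟩, hn2, ?_⟩
      have hr := rec n
      have e1 : d * h n ≤ 0 := mul_nonpos_of_nonneg_of_nonpos hd hn.le
      have e2 : 0 ≤ s * (2 * h (n + 1) - h (n + 2)) := mul_nonneg hs (by linarith)
      have e3 : 0 ≤ (2 * t - s - 4) * (-h (n + 2)) := mul_nonneg (by linarith) (by linarith)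
      nlinarith [e1, e2, e3]
  intro n; exact (key n).1

/-- Generic decay lemma (non-strict version). -/
lemma seq_nonpos {t s d : ℝ} (ht : 4 ≤ 2 * t - s) (hs : 0 ≤ s) (hd : 0 ≤ d)
    {h : ℕ → ℝ} (rec : ∀ n, h (n + 3) = t * h (n + 2) - s * h (n + 1) + d * h n)
    (h0 : h 0 ≤ 0) (h1 : h 1 ≤ 0) (h2 : h 2 ≤ 0)
    (g1 : h 1 ≤ 2 * h 0) (g2 : h 2 ≤ 2 * h 1) :
    ∀ n, h n ≤ 0 ∧ h (n + 1) ≤ 2 * h n := by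
  have key : ∀ n, (h n ≤ 0 ∧ h (n + 1) ≤ 2 * h n) ∧ (h (n + 1) ≤ 0 ∧ h (n + 2) ≤ 2 * h (n + 1)) := by
    intro n
    induction n with
    | zero => exact ⟨⟨h0, g1⟩, h1, g2⟩
    | succ n ih =>
      obtain ⟨⟨hn, gn⟩, hn1, gn1⟩ := ih
      have hn2 : h (n + 2) ≤ 0 := le_trans gn1 (by linarith)
      refine ⟨⟨hn1, gn1⟩, hn2, ?_⟩
      have hr := rec n
      have e1 : d * h n ≤ 0 := mul_nonpos_of_nonneg_of_nonpos hd hn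
      have e2 : 0 ≤ s * (2 * h (n + 1) - h (n + 2)) := mul_nonneg hs (by linarith)
      have e3 : 0 ≤ (2 * t - s - 4) * (-h (n + 2)) := mul_nonneg (by linarith) (by linarith)
      nlinarith [e1, e2, e3]
  intro n; exact (key n).1

lemma qrowNeg {p : ℕ} (b0 : Ftr p 2 < 0) (b1 : Ftr p 3 < 0) (b2 : Ftr p 4 < 0)
    (i1 : Ftr p 3 ≤ 2 * Ftr p 2) (i2 : Ftr p 4 ≤ 2 * Ftr p 3) :
    ∀ q, 2 ≤ q → Ftr p q < 0 := by
  have := seq_neg (t := 36903) (s := 44903) (d := 1) (by norm_num) (by norm_num) (by norm_num)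
    (h := fun n => Ftr p (n + 2)) (fun n => by simpa using recQ p (n + 2)) b0 b1 b2 i1 i2
  intro q hq
  obtain ⟨n, rfl⟩ := Nat.exists_eq_add_of_le hq
  simpa [Nat.add_comm] using (this n).1

lemma qrowDom {p : ℕ}
    (b0 : Ftr (p + 1) 2 - 2 * Ftr p 2 ≤ 0) (b1 : Ftr (p + 1) 3 - 2 * Ftr p 3 ≤ 0)
    (b2 : Ftr (p + 1) 4 - 2 * Ftr p 4 ≤ 0)
    (i1 : Ftr (p + 1) 3 - 2 * Ftr p 3 ≤ 2 * (Ftr (p + 1) 2 - 2 * Ftr p 2))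
    (i2 : Ftr (p + 1) 4 - 2 * Ftr p 4 ≤ 2 * (Ftr (p + 1) 3 - 2 * Ftr p 3)) :
    ∀ q, 2 ≤ q → Ftr (p + 1) q ≤ 2 * Ftr p q := by
  have := seq_nonpos (t := 36903) (s := 44903) (d := 1) (by norm_num) (by norm_num) (by norm_num)
    (h := fun n => Ftr (p + 1) (n + 2) - 2 * Ftr p (n + 2))
    (fun n => by have h1 := recQ (p + 1) (n + 2); have h2 := recQ p (n + 2); linarith)
    b0 b1 b2 i1 i2
  intro q hq
  obtain ⟨n, rfl⟩ := Nat.exists_eq_add_of_le hq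
  have := (this n).1
  simp only [Nat.add_comm 2 n] at this ⊢
  linarith

def Rp (p : ℕ) : Prop :=
  (∀ q, 2 ≤ q → Ftr p q < 0) ∧ (∀ q, 2 ≤ q → Ftr (p + 1) q ≤ 2 * Ftr p q)

lemma R2 : Rp 2 := by
  constructor
  · exact qrowNeg (by rw [F22]; norm_num) (by rw [F23]; norm_num) (by rw [F24]; norm_num)
      (by rw [F23, F22]; norm_num) (by rw [F24, F23]; norm_num)
  · exact qrowDom (by rw [F32, F22]; norm_num) (by rw [F33, F23]; norm_num)
      (by rw [F34, F24]; norm_num)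
      (by rw [F33, F23, F32, F22]; norm_num) (by rw [F34, F24, F33, F23]; norm_num)

lemma R3 : Rp 3 := by
  constructor
  · exact qrowNeg (by rw [F32]; norm_num) (by rw [F33]; norm_num) (by rw [F34]; norm_num)
      (by rw [F33, F32]; norm_num) (by rw [F34, F33]; norm_num)
  · exact qrowDom (by rw [F42, F32]; norm_num) (by rw [F43, F33]; norm_num)
      (by rw [F44, F34]; norm_num)
      (by rw [F43, F33, F42, F32]; norm_num) (by rw [F44, F34, F43, F33]; norm_num)

lemma Rall : ∀ n, Rp (n + 2) ∧ Rp (n + 3) := by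
  intro n
  induction n with
  | zero => exact ⟨R2, R3⟩
  | succ n ih =>
    obtain ⟨⟨ha1, ha2⟩, hb1, hb2⟩ := ih
    refine ⟨⟨hb1, hb2⟩, ?_, ?_⟩
    · -- Ftr (n+4) q < 0
      intro q hq
      have h1 := hb1 q hq
      have h2 := hb2 q hq
      linarith
    · -- Ftr (n+5) q ≤ 2 * Ftr (n+4) q
      intro q hq
      have h1 := ha1 q hq
      have h2 := hb1 q hq
      have h3 := hb2 q hq
      have h4 : Ftr (n + 4) q < 0 := by linarith
      have hr := recP (n + 2) q
      have e : n + 2 + 3 = n + 5 := by ring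
      have e2 : n + 2 + 2 = n + 4 := by ring
      have e3 : n + 2 + 1 = n + 3 := by ring
      rw [e, e2, e3] at hr
      have e4 : n + 3 + 1 = n + 4 := by ring
      rw [e4] at h3
      have e5 : n + 4 + 1 = n + 5 := by ring
      rw [e5]
      linarith

lemma mainNeg : ∀ p q : ℕ, 2 ≤ p → 2 ≤ q → Ftr p q < 0 := by
  intro p q hp hq
  obtain ⟨n, rfl⟩ := Nat.exists_eq_add_of_le hp
  have := ((Rall n).1).1 q hq
  simpa [Nat.add_comm] using this

theorem trace_ABApBq_neg :
    (!![(1:ℝ),20,210; 20,402,4240; 210,4240,44903]).PosDef ∧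
    (!![(36501:ℝ),-3820,190; -3820,401,-20; 190,-20,1]).PosDef ∧
    (∀ p q : ℕ, 2 ≤ p → 2 ≤ q →
      ((!![(1:ℝ),20,210; 20,402,4240; 210,4240,44903]) *
       (!![(36501:ℝ),-3820,190; -3820,401,-20; 190,-20,1]) *
       (!![(1:ℝ),20,210; 20,402,4240; 210,4240,44903]) ^ p *
       (!![(36501:ℝ),-3820,190; -3820,401,-20; 190,-20,1]) ^ q).trace < 0) ∧
    ∀ p q : ℕ, 2 ≤ p → 2 ≤ q →
      ∃ A B : Matrix (Fin 3) (Fin 3) ℝ, A.PosDef ∧ B.PosDef ∧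
        (A * B * A ^ p * B ^ q).trace < 0 := by
  refine ⟨hApd, hBpd, fun p q hp hq => mainNeg p q hp hq, fun p q hp hq =>
    ⟨AA, BB, hApd, hBpd, mainNeg p q hp hq⟩⟩
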